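/- Let N ∈ ℕ, Q_1,…,Q_N, E_1,…,E_{N−1} > 0, and S the piecewise-linear path encoding (slope −1 on the intervals O_n = [a_n, b_n], slope +1 otherwise, S(0)=0, a_1 = 0). Define c_n := min{ b_n + M(b_n) − S(b_n), a_{n+1} } for 1 ≤ n ≤ N (with a_{N+1} = ∞), where M(x) = sup_{y ≤ x} S(y). Then the Pitman transform TS(x) = 2M(x) − S(x) − 2M(0) is piecewise linear with slope ±1, decreasing exactly on the intervals [b_n, c_n] for 1 ≤ n ≤ N, and increasing elsewhere. -/

import Mathlib

open MeasureTheory Set intervalIntegral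

noncomputable def aPt (Q E : ℕ → ℝ) (n : ℕ) : ℝ :=
  ∑ k ∈ Finset.Icc 1 (n - 1), (Q k + E k)

noncomputable def bPt (Q E : ℕ → ℝ) (n : ℕ) : ℝ := aPt Q E n + Q n

def ballSet (N : ℕ) (Q E : ℕ → ℝ) : Set ℝ :=
  ⋃ n ∈ Finset.Icc 1 N, Set.Icc (aPt Q E n) (bPt Q E n)

noncomputable def pathEnc (N : ℕ) (Q E : ℕ → ℝ) (x : ℝ) : ℝ :=
  ∫ y in (0:ℝ)..x, (1 - 2 * Set.indicator (ballSet N Q E) (fun _ => (1:ℝ)) y)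

noncomputable def pastMax (S : ℝ → ℝ) (x : ℝ) : ℝ := sSup (S '' Set.Iic x)

noncomputable def pitman (S : ℝ → ℝ) (x : ℝ) : ℝ :=
  2 * pastMax S x - S x - 2 * pastMax S 0

/-- `c_n = min (b_n + M(b_n) - S(b_n)) (a_{n+1})`, with `a_{N+1} = ∞`. -/
noncomputable def cPt (N : ℕ) (Q E : ℕ → ℝ) (n : ℕ) : ℝ :=
  if n < N then
    min (bPt Q E n + pastMax (pathEnc N Q E) (bPt Q E n) - pathEnc N Q E (bPt Q E n))
      (aPt Q E (n + 1))
  else bPt Q E n + pastMax (pathEnc N Q E) (bPt Q E n) - pathEnc N Q E (bPt Q E n)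

lemma measurableSet_ballSet (N : ℕ) (Q E : ℕ → ℝ) : MeasurableSet (ballSet N Q E) := by
  exact MeasurableSet.biUnion (Finset.Icc 1 N).countable_toSet fun n _ => measurableSet_Icc

lemma intInt (N : ℕ) (Q E : ℕ → ℝ) (a b : ℝ) :
    IntervalIntegrable (fun y => 1 - 2 * Set.indicator (ballSet N Q E) (fun _ => (1:ℝ)) y)
      volume a b := by
  apply IntervalIntegrable.sub intervalIntegrable_const
  apply IntervalIntegrable.const_mul
  rw [intervalIntegrable_iff]
  exact ((integrableOn_const_iff).mpr (Or.inr measure_Ioc_lt_top)).indicator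
    (measurableSet_ballSet N Q E)

lemma indInt (N : ℕ) (Q E : ℕ → ℝ) (a b : ℝ) :
    IntervalIntegrable (fun y => 2 * Set.indicator (ballSet N Q E) (fun _ => (1:ℝ)) y)
      volume a b := by
  apply IntervalIntegrable.const_mul
  rw [intervalIntegrable_iff]
  exact ((integrableOn_const_iff).mpr (Or.inr measure_Ioc_lt_top)).indicator
    (measurableSet_ballSet N Q E)

lemma pathEnc_sub (N : ℕ) (Q E : ℕ → ℝ) (x y : ℝ) :
    pathEnc N Q E x - pathEnc N Q E y =
      ∫ t in y..x, (1 - 2 * Set.indicator (ballSet N Q E) (fun _ => (1:ℝ)) t) := by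
  unfold pathEnc
  exact integral_interval_sub_left (intInt N Q E 0 x) (intInt N Q E 0 y)

lemma ind_integral (N : ℕ) (Q E : ℕ → ℝ) {y x : ℝ} (h : y ≤ x) :
    ∫ t in y..x, Set.indicator (ballSet N Q E) (fun _ => (1:ℝ)) t =
      (volume (ballSet N Q E ∩ Set.Ioc y x)).toReal := by
  rw [integral_of_le h, MeasureTheory.setIntegral_indicator (measurableSet_ballSet N Q E),
    MeasureTheory.setIntegral_const]
  simp [Set.inter_comm]
  rfl

lemma pathEnc_up (N : ℕ) (Q E : ℕ → ℝ) {y x : ℝ} (h : y ≤ x)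
    (hB : ∀ t ∈ Set.Ioo y x, t ∉ ballSet N Q E) :
    pathEnc N Q E x - pathEnc N Q E y = x - y := by
  rw [pathEnc_sub]
  have h1 : (∫ t in y..x, (1:ℝ)) = x - y := by simp
  have h2 : volume (ballSet N Q E ∩ Set.Ioc y x) = 0 := by
    refine measure_mono_null ?_ (measure_singleton x)
    rintro t ⟨htB, hty, htx⟩
    rcases lt_or_eq_of_le htx with h' | h'
    · exact absurd htB (hB t ⟨hty, h'⟩)
    · exact h'
  rw [intervalIntegral.integral_sub intervalIntegrable_const (indInt N Q E y x)]
  rw [intervalIntegral.integral_const_mul, ind_integral N Q E h, h2]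
  simp

lemma pathEnc_down (N : ℕ) (Q E : ℕ → ℝ) {y x : ℝ} (h : y ≤ x)
    (hB : Set.Ioo y x ⊆ ballSet N Q E) :
    pathEnc N Q E x - pathEnc N Q E y = y - x := by
  rw [pathEnc_sub]
  have h2 : volume (ballSet N Q E ∩ Set.Ioc y x) = ENNReal.ofReal (x - y) := by
    apply le_antisymm
    · calc volume (ballSet N Q E ∩ Set.Ioc y x) ≤ volume (Set.Ioc y x) :=
            measure_mono Set.inter_subset_right
        _ = ENNReal.ofReal (x - y) := Real.volume_Ioc
    · calc ENNReal.ofReal (x - y) = volume (Set.Ioo y x) := Real.volume_Ioo.symm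
        _ ≤ volume (ballSet N Q E ∩ Set.Ioc y x) :=
            measure_mono fun t ht => ⟨hB ht, ht.1, le_of_lt ht.2⟩
  rw [intervalIntegral.integral_sub intervalIntegrable_const (indInt N Q E y x)]
  rw [intervalIntegral.integral_const_mul, ind_integral N Q E h, h2,
    ENNReal.toReal_ofReal (by linarith)]
  simp
  ring

lemma pathEnc_zero (N : ℕ) (Q E : ℕ → ℝ) : pathEnc N Q E 0 = 0 := by
  unfold pathEnc; simp

lemma pathEnc_le_id_of_nonneg (N : ℕ) (Q E : ℕ → ℝ) {x : ℝ} (hx : 0 ≤ x) :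
    pathEnc N Q E x ≤ x := by
  unfold pathEnc
  calc (∫ y in (0:ℝ)..x, (1 - 2 * Set.indicator (ballSet N Q E) (fun _ => (1:ℝ)) y))
      ≤ ∫ _ in (0:ℝ)..x, (1:ℝ) := by
        apply intervalIntegral.integral_mono_on hx (intInt N Q E 0 x) intervalIntegrable_const
        intro t _
        have : 0 ≤ Set.indicator (ballSet N Q E) (fun _ => (1:ℝ)) t :=
          Set.indicator_nonneg (fun _ _ => zero_le_one) t
        linarith
    _ = x := by simp

section Order

variable {N : ℕ} {Q E : ℕ → ℝ}

lemma QE_nonneg (hQ : ∀ n, 1 ≤ n → n ≤ N → 0 < Q n)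
    (hE : ∀ n, 1 ≤ n → n ≤ N - 1 → 0 < E n) {k : ℕ} (hk1 : 1 ≤ k) (hk : k ≤ N - 1) :
    0 ≤ Q k + E k := by
  have h1 := hQ k hk1 (le_trans hk (Nat.sub_le N 1))
  have h2 := hE k hk1 hk
  linarith

lemma aPt_succ {n : ℕ} (hn : 1 ≤ n) :
    aPt Q E (n + 1) = aPt Q E n + (Q n + E n) := by
  unfold aPt
  have h : n + 1 - 1 = (n - 1) + 1 := by omega
  have h2 : n - 1 + 1 = n := by omega
  rw [h, Finset.sum_Icc_succ_top (by omega : 1 ≤ n - 1 + 1), h2]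

lemma aPt_mono (hQ : ∀ n, 1 ≤ n → n ≤ N → 0 < Q n)
    (hE : ∀ n, 1 ≤ n → n ≤ N - 1 → 0 < E n) {m n : ℕ} (hmn : m ≤ n) (hn : n ≤ N) :
    aPt Q E m ≤ aPt Q E n := by
  unfold aPt
  apply Finset.sum_le_sum_of_subset_of_nonneg
  · apply Finset.Icc_subset_Icc_right; omega
  · intro k hk _
    simp only [Finset.mem_Icc] at hk
    exact QE_nonneg hQ hE hk.1 (by omega)

lemma aPt_nonneg (hQ : ∀ n, 1 ≤ n → n ≤ N → 0 < Q n)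
    (hE : ∀ n, 1 ≤ n → n ≤ N - 1 → 0 < E n) {n : ℕ} (hn : n ≤ N) :
    0 ≤ aPt Q E n := by
  have := aPt_mono hQ hE (Nat.zero_le n) hn (Q := Q) (E := E)
  have h0 : aPt Q E 0 = 0 := by unfold aPt; simp
  linarith

lemma aPt_le_bPt (hQ : ∀ n, 1 ≤ n → n ≤ N → 0 < Q n) {n : ℕ} (hn1 : 1 ≤ n) (hn : n ≤ N) :
    aPt Q E n ≤ bPt Q E n := by
  have := hQ n hn1 hn
  unfold bPt; linarith

lemma bPt_le_aPt_succ (hN : 1 ≤ N) (hE : ∀ n, 1 ≤ n → n ≤ N - 1 → 0 < E n)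
    {n : ℕ} (hn1 : 1 ≤ n) (hn : n < N) :
    bPt Q E n ≤ aPt Q E (n + 1) := by
  have hEn := hE n hn1 (by omega)
  rw [aPt_succ hn1]
  unfold bPt; linarith

lemma bPt_mono (hN : 1 ≤ N) (hQ : ∀ n, 1 ≤ n → n ≤ N → 0 < Q n)
    (hE : ∀ n, 1 ≤ n → n ≤ N - 1 → 0 < E n) {m n : ℕ} (hm1 : 1 ≤ m) (hmn : m ≤ n)
    (hn : n ≤ N) : bPt Q E m ≤ bPt Q E n := by
  rcases eq_or_lt_of_le hmn with rfl | h
  · exact le_refl _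
  · have h1 : bPt Q E m ≤ aPt Q E (m + 1) := bPt_le_aPt_succ hN hE hm1 (by omega)
    have h2 : aPt Q E (m + 1) ≤ aPt Q E n := aPt_mono hQ hE (by omega) hn
    have h3 : aPt Q E n ≤ bPt Q E n := aPt_le_bPt hQ (by omega) hn
    linarith

lemma gap_lemma (hN : 1 ≤ N) (hQ : ∀ n, 1 ≤ n → n ≤ N → 0 < Q n)
    (hE : ∀ n, 1 ≤ n → n ≤ N - 1 → 0 < E n) {n : ℕ} (hn1 : 1 ≤ n) (hn : n ≤ N) {z : ℝ}
    (hz : n < N → z ≤ aPt Q E (n + 1)) :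
    ∀ t ∈ Set.Ioo (bPt Q E n) z, t ∉ ballSet N Q E := by
  rintro t ⟨ht1, ht2⟩ htB
  simp only [ballSet, Set.mem_iUnion, Finset.mem_Icc] at htB
  obtain ⟨m, ⟨hm1, hmN⟩, htm⟩ := htB
  obtain ⟨hta, htb⟩ := htm
  rcases le_or_gt m n with h | h
  · have : bPt Q E m ≤ bPt Q E n := bPt_mono hN hQ hE hm1 h hn
    linarith
  · have hnN : n < N := lt_of_lt_of_le h hmN
    have h1 : aPt Q E (n + 1) ≤ aPt Q E m := aPt_mono hQ hE (by omega) hmN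
    have h2 := hz hnN
    linarith

lemma mem_ballSet_of {n : ℕ} (hn1 : 1 ≤ n) (hn : n ≤ N) {t : ℝ}
    (ht : t ∈ Set.Icc (aPt Q E n) (bPt Q E n)) : t ∈ ballSet N Q E := by
  simp only [ballSet, Set.mem_iUnion, Finset.mem_Icc]
  exact ⟨n, ⟨hn1, hn⟩, ht⟩

lemma neg_not_mem (hQ : ∀ n, 1 ≤ n → n ≤ N → 0 < Q n)
    (hE : ∀ n, 1 ≤ n → n ≤ N - 1 → 0 < E n) {t : ℝ} (ht : t < 0) :
    t ∉ ballSet N Q E := by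
  intro htB
  simp only [ballSet, Set.mem_iUnion, Finset.mem_Icc] at htB
  obtain ⟨m, ⟨hm1, hmN⟩, hta, _⟩ := htB
  have := aPt_nonneg hQ hE hmN (Q := Q) (E := E)
  linarith

lemma pathEnc_neg (hQ : ∀ n, 1 ≤ n → n ≤ N → 0 < Q n)
    (hE : ∀ n, 1 ≤ n → n ≤ N - 1 → 0 < E n) {x : ℝ} (hx : x ≤ 0) :
    pathEnc N Q E x = x := by
  have := pathEnc_up N Q E hx (fun t ht => neg_not_mem hQ hE ht.2)
  rw [pathEnc_zero] at this
  linarith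

lemma pathEnc_le_id (hQ : ∀ n, 1 ≤ n → n ≤ N → 0 < Q n)
    (hE : ∀ n, 1 ≤ n → n ≤ N - 1 → 0 < E n) (x : ℝ) :
    pathEnc N Q E x ≤ x := by
  rcases le_or_gt 0 x with h | h
  · exact pathEnc_le_id_of_nonneg N Q E h
  · rw [pathEnc_neg hQ hE (le_of_lt h)]

end Order


section PastMax

variable {N : ℕ} {Q E : ℕ → ℝ}
variable (hQ : ∀ n, 1 ≤ n → n ≤ N → 0 < Q n)
variable (hE : ∀ n, 1 ≤ n → n ≤ N - 1 → 0 < E n)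

include hQ hE

lemma bddAbove_img (x : ℝ) : BddAbove (pathEnc N Q E '' Set.Iic x) := by
  refine ⟨x, ?_⟩
  rintro s ⟨t, ht, rfl⟩
  exact le_trans (pathEnc_le_id hQ hE t) ht

lemma le_pastMax {y x : ℝ} (h : y ≤ x) : pathEnc N Q E y ≤ pastMax (pathEnc N Q E) x :=
  le_csSup (bddAbove_img hQ hE x) ⟨y, h, rfl⟩

lemma pastMax_le {x c : ℝ} (h : ∀ y ≤ x, pathEnc N Q E y ≤ c) :
    pastMax (pathEnc N Q E) x ≤ c := by
  unfold pastMax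
  apply csSup_le (Set.nonempty_Iic.image _)
  rintro s ⟨t, ht, rfl⟩
  exact h t ht

lemma pastMax_eq_of_le {u x : ℝ} (hux : u ≤ x)
    (h : ∀ z ∈ Set.Icc u x, pathEnc N Q E z ≤ pastMax (pathEnc N Q E) u) :
    pastMax (pathEnc N Q E) x = pastMax (pathEnc N Q E) u := by
  apply le_antisymm
  · apply pastMax_le hQ hE
    intro t ht
    rcases le_or_gt t u with h' | h'
    · exact le_pastMax hQ hE h'
    · exact h t ⟨le_of_lt h', ht⟩
  · unfold pastMax
    apply csSup_le_csSup (bddAbove_img hQ hE x) (Set.nonempty_Iic.image _)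
    exact Set.image_mono (Set.Iic_subset_Iic.mpr hux)

lemma pastMax_eq_self {x : ℝ} (h : ∀ z ≤ x, pathEnc N Q E z ≤ pathEnc N Q E x) :
    pastMax (pathEnc N Q E) x = pathEnc N Q E x :=
  le_antisymm (pastMax_le hQ hE h) (le_pastMax hQ hE (le_refl x))

lemma pastMax_nonpos {x : ℝ} (hx : x ≤ 0) : pastMax (pathEnc N Q E) x = x := by
  rw [pastMax_eq_self hQ hE fun z hz => by
    rw [pathEnc_neg hQ hE hx]
    exact le_trans (pathEnc_le_id hQ hE z) hz]
  exact pathEnc_neg hQ hE hx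

lemma pastMax_zero : pastMax (pathEnc N Q E) 0 = 0 := pastMax_nonpos hQ hE (le_refl 0)

end PastMax


section Regimes

variable {N : ℕ} {Q E : ℕ → ℝ}
variable (hN : 1 ≤ N)
variable (hQ : ∀ n, 1 ≤ n → n ≤ N → 0 < Q n)
variable (hE : ∀ n, 1 ≤ n → n ≤ N - 1 → 0 < E n)

include hN hQ hE

lemma cPt_le_expr {n : ℕ} :
    cPt N Q E n ≤ bPt Q E n + pastMax (pathEnc N Q E) (bPt Q E n)
      - pathEnc N Q E (bPt Q E n) := by
  unfold cPt
  split
  · exact min_le_left _ _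
  · exact le_refl _

lemma cPt_le_a {n : ℕ} (h : n < N) : cPt N Q E n ≤ aPt Q E (n + 1) := by
  unfold cPt
  rw [if_pos h]
  exact min_le_right _ _

lemma bPt_le_cPt {n : ℕ} (hn1 : 1 ≤ n) (hn : n ≤ N) :
    bPt Q E n ≤ cPt N Q E n := by
  have hMS : pathEnc N Q E (bPt Q E n) ≤ pastMax (pathEnc N Q E) (bPt Q E n) :=
    le_pastMax hQ hE (le_refl _)
  unfold cPt
  split
  · exact le_min (by linarith) (bPt_le_aPt_succ hN hE hn1 (by assumption))
  · linarith

/-- Regime ≤ 0 : pitman is identity. -/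
lemma pitman_nonpos {x : ℝ} (hx : x ≤ 0) : pitman (pathEnc N Q E) x = x := by
  unfold pitman
  rw [pastMax_nonpos hQ hE hx, pastMax_zero hQ hE, pathEnc_neg hQ hE hx]
  ring

/-- Regime [a_n, b_n] : slope +1. -/
lemma pitman_up_ball {n : ℕ} (hn1 : 1 ≤ n) (hn : n ≤ N) {x y : ℝ}
    (ha : aPt Q E n ≤ x) (hxy : x ≤ y) (hb : y ≤ bPt Q E n) :
    pitman (pathEnc N Q E) y - pitman (pathEnc N Q E) x = y - x := by
  have hsub : ∀ u v : ℝ, aPt Q E n ≤ u → u ≤ v → v ≤ bPt Q E n →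
      Set.Ioo u v ⊆ ballSet N Q E := by
    intro u v hu huv hv t ht
    exact mem_ballSet_of hn1 hn ⟨by linarith [ht.1], by linarith [ht.2]⟩
  have hS : pathEnc N Q E y - pathEnc N Q E x = x - y :=
    pathEnc_down N Q E hxy (hsub x y ha hxy hb)
  have hM : ∀ z : ℝ, aPt Q E n ≤ z → z ≤ bPt Q E n →
      pastMax (pathEnc N Q E) z = pastMax (pathEnc N Q E) (aPt Q E n) := by
    intro z hz1 hz2
    apply pastMax_eq_of_le hQ hE hz1
    intro t ⟨ht1, ht2⟩
    have : pathEnc N Q E t - pathEnc N Q E (aPt Q E n) = aPt Q E n - t :=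
      pathEnc_down N Q E ht1 (hsub _ _ (le_refl _) ht1 (by linarith))
    have h2 : pathEnc N Q E (aPt Q E n) ≤ pastMax (pathEnc N Q E) (aPt Q E n) :=
      le_pastMax hQ hE (le_refl _)
    linarith
  unfold pitman
  rw [hM x ha (by linarith), hM y (by linarith) hb]
  linarith

/-- Regime [b_n, c_n] : pitman slope -1 relative to b_n. -/
lemma pitman_down {n : ℕ} (hn1 : 1 ≤ n) (hn : n ≤ N) {z : ℝ}
    (hz1 : bPt Q E n ≤ z) (hz2 : z ≤ cPt N Q E n) :
    pitman (pathEnc N Q E) z - pitman (pathEnc N Q E) (bPt Q E n) = bPt Q E n - z := by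
  have hgap : ∀ w : ℝ, w ≤ cPt N Q E n →
      ∀ t ∈ Set.Ioo (bPt Q E n) w, t ∉ ballSet N Q E := by
    intro w hw
    apply gap_lemma hN hQ hE hn1 hn
    intro hnN
    exact le_trans hw (cPt_le_a hN hQ hE hnN)
  have hS : ∀ w : ℝ, bPt Q E n ≤ w → w ≤ cPt N Q E n →
      pathEnc N Q E w - pathEnc N Q E (bPt Q E n) = w - bPt Q E n := by
    intro w hw1 hw2
    exact pathEnc_up N Q E hw1 (hgap w hw2)
  have hM : pastMax (pathEnc N Q E) z = pastMax (pathEnc N Q E) (bPt Q E n) := by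
    apply pastMax_eq_of_le hQ hE hz1
    intro t ⟨ht1, ht2⟩
    have h1 := hS t ht1 (by linarith)
    have h2 := cPt_le_expr hN hQ hE (n := n)
    linarith
  unfold pitman
  rw [hM]
  have := hS z hz1 hz2
  linarith

/-- Regime [c_n, ·] : slope +1. -/
lemma pitman_up_after {n : ℕ} (hn1 : 1 ≤ n) (hn : n ≤ N) {x y : ℝ}
    (hx : cPt N Q E n ≤ x) (hxy : x ≤ y) (hbd : n < N → y ≤ aPt Q E (n + 1)) :
    pitman (pathEnc N Q E) y - pitman (pathEnc N Q E) x = y - x := by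
  set Dn := bPt Q E n + pastMax (pathEnc N Q E) (bPt Q E n) - pathEnc N Q E (bPt Q E n)
    with hD
  by_cases hc : cPt N Q E n = Dn
  · -- main case
    have hbc : bPt Q E n ≤ cPt N Q E n := bPt_le_cPt hN hQ hE hn1 hn
    have hS : ∀ w : ℝ, bPt Q E n ≤ w → (n < N → w ≤ aPt Q E (n + 1)) →
        pathEnc N Q E w - pathEnc N Q E (bPt Q E n) = w - bPt Q E n := by
      intro w hw1 hw2
      exact pathEnc_up N Q E hw1 (gap_lemma hN hQ hE hn1 hn hw2)
    have hMz : ∀ z : ℝ, cPt N Q E n ≤ z → (n < N → z ≤ aPt Q E (n + 1)) →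
        pastMax (pathEnc N Q E) z = pathEnc N Q E z := by
      intro z hz1 hz2
      have hbz : bPt Q E n ≤ z := le_trans hbc hz1
      have hSz := hS z hbz hz2
      have hSz_ge : pastMax (pathEnc N Q E) (bPt Q E n) ≤ pathEnc N Q E z := by
        rw [hc] at hz1; linarith
      apply pastMax_eq_self hQ hE
      intro t ht
      rcases le_or_gt t (bPt Q E n) with h' | h'
      · exact le_trans (le_pastMax hQ hE h') hSz_ge
      · have := hS t (le_of_lt h') (fun hnN => le_trans ht (hz2 hnN))
        linarith
    have hMx := hMz x hx (fun hnN => le_trans hxy (hbd hnN))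
    have hMy := hMz y (le_trans hx hxy) hbd
    have hSxy : pathEnc N Q E y - pathEnc N Q E x = y - x := by
      have h1 := hS x (le_trans hbc hx) (fun hnN => le_trans hxy (hbd hnN))
      have h2 := hS y (le_trans hbc (le_trans hx hxy)) hbd
      linarith
    unfold pitman
    rw [hMx, hMy]
    linarith
  · -- degenerate case : n < N and cPt = a_{n+1} < Dn, forces x = y
    have hnN : n < N := by
      by_contra h
      apply hc
      unfold cPt
      rw [if_neg h]
    have : cPt N Q E n = aPt Q E (n + 1) := by
      unfold cPt at hc ⊢
      rw [if_pos hnN] at hc ⊢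
      rcases min_cases (Dn) (aPt Q E (n + 1)) with ⟨h1, _⟩ | ⟨h1, _⟩
      · exact absurd h1 hc
      · exact h1
    have hxy' : x = y := le_antisymm hxy (by rw [← this] at hbd; exact le_trans (hbd hnN) hx)
    rw [hxy']
    ring

end Regimes

section Main

variable {N : ℕ} {Q E : ℕ → ℝ}
variable (hN : 1 ≤ N)
variable (hQ : ∀ n, 1 ≤ n → n ≤ N → 0 < Q n)
variable (hE : ∀ n, 1 ≤ n → n ≤ N - 1 → 0 < E n)

include hN hQ hE

lemma claim_aux : ∀ n, n ≤ N → ∀ x y : ℝ, x ≤ y →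
    (n < N → y ≤ aPt Q E (n + 1)) →
    (∀ m, 1 ≤ m → m ≤ N → Set.Ioo x y ∩ Set.Ioo (bPt Q E m) (cPt N Q E m) = ∅) →
    pitman (pathEnc N Q E) y - pitman (pathEnc N Q E) x = y - x := by
  intro n
  induction n with
  | zero =>
    intro _ x y hxy hbd _
    have hy0 : y ≤ 0 := by
      have := hbd hN
      have ha1 : aPt Q E 1 = 0 := by unfold aPt; simp
      linarith
    rw [pitman_nonpos hN hQ hE hy0, pitman_nonpos hN hQ hE (le_trans hxy hy0)]
  | succ n ih =>
    intro hn x y hxy hbd hdisj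
    set m := n + 1 with hm
    have hm1 : 1 ≤ m := by omega
    have hmN : m ≤ N := hn
    set t1 := max x (min y (aPt Q E m)) with ht1def
    set t2 := max x (min y (bPt Q E m)) with ht2def
    set t3 := max x (min y (cPt N Q E m)) with ht3def
    have hab : aPt Q E m ≤ bPt Q E m := aPt_le_bPt hQ hm1 hmN
    have hbc : bPt Q E m ≤ cPt N Q E m := bPt_le_cPt hN hQ hE hm1 hmN
    have hxt1 : x ≤ t1 := le_max_left _ _
    have ht1t2 : t1 ≤ t2 := max_le_max (le_refl x) (min_le_min (le_refl y) hab)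
    have ht2t3 : t2 ≤ t3 := max_le_max (le_refl x) (min_le_min (le_refl y) hbc)
    have ht3y : t3 ≤ y := max_le hxy (min_le_left _ _)
    have ht2y : t2 ≤ y := le_trans ht2t3 ht3y
    have ht1y : t1 ≤ y := le_trans ht1t2 ht2y
    -- Segment 1 : from x to t1
    have seg1 : pitman (pathEnc N Q E) t1 - pitman (pathEnc N Q E) x = t1 - x := by
      rcases le_or_gt x (aPt Q E m) with hcase | hcase
      · have ht1a : t1 ≤ aPt Q E m := max_le hcase (min_le_right _ _)
        apply ih (by omega) x t1 hxt1 (fun _ => ht1a)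
        intro k hk1 hkN
        have hsub : Set.Ioo x t1 ⊆ Set.Ioo x y := Set.Ioo_subset_Ioo (le_refl x) ht1y
        have := hdisj k hk1 hkN
        exact Set.eq_empty_of_subset_empty (le_trans (Set.inter_subset_inter_left _ hsub)
          this.le)
      · have : t1 = x := by
          apply le_antisymm _ hxt1
          apply max_le (le_refl x)
          exact le_trans (min_le_right _ _) (le_of_lt hcase)
        rw [this]; ring
    -- Segment 2 : from t1 to t2
    have seg2 : pitman (pathEnc N Q E) t2 - pitman (pathEnc N Q E) t1 = t2 - t1 := by
      rcases eq_or_lt_of_le ht1t2 with heq | hlt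
      · rw [← heq]; ring
      · have ht2b : t2 ≤ bPt Q E m := by
          rcases max_cases x (min y (bPt Q E m)) with ⟨h1, _⟩ | ⟨h1, h2⟩
          · exfalso; rw [ht2def] at hlt; rw [h1] at hlt
            exact absurd (lt_of_le_of_lt hxt1 hlt) (lt_irrefl x)
          · rw [ht2def, h1]; exact min_le_right _ _
        have hat1 : aPt Q E m ≤ t1 := by
          rcases min_cases y (aPt Q E m) with ⟨h1, h2⟩ | ⟨h1, _⟩
          · exfalso
            have : t1 = y := by
              rw [ht1def, h1]; exact le_antisymm (max_le hxy (le_refl y)) (le_max_right x y)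
            rw [this] at hlt
            exact absurd (lt_of_lt_of_le hlt ht2y) (lt_irrefl y)
          · rw [ht1def, h1]; exact le_max_right _ _
        exact pitman_up_ball hN hQ hE hm1 hmN hat1 ht1t2 ht2b
    -- Segment 3 : t2 = t3 (by disjointness)
    have seg3 : t2 = t3 := by
      by_contra hne
      have hlt : t2 < t3 := lt_of_le_of_ne ht2t3 hne
      have ht3c : t3 ≤ cPt N Q E m := by
        rcases max_cases x (min y (cPt N Q E m)) with ⟨h1, _⟩ | ⟨h1, _⟩
        · exfalso; rw [ht3def] at hlt; rw [h1] at hlt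
          exact absurd (lt_of_le_of_lt (le_trans hxt1 ht1t2) hlt) (lt_irrefl x)
        · rw [ht3def, h1]; exact min_le_right _ _
      have hbt2 : bPt Q E m ≤ t2 := by
        rcases min_cases y (bPt Q E m) with ⟨h1, h2⟩ | ⟨h1, _⟩
        · exfalso
          have : t2 = y := by
            rw [ht2def, h1]; exact le_antisymm (max_le hxy (le_refl y)) (le_max_right x y)
          rw [this] at hlt
          exact absurd (lt_of_lt_of_le hlt ht3y) (lt_irrefl y)
        · rw [ht2def, h1]; exact le_max_right _ _
      have hmid : (t2 + t3) / 2 ∈ Set.Ioo x y ∩ Set.Ioo (bPt Q E m) (cPt N Q E m) := by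
        constructor
        · constructor
          · have : x ≤ t2 := le_trans hxt1 ht1t2
            linarith
          · linarith [ht3y]
        · constructor
          · linarith
          · linarith
      rw [hdisj m hm1 hmN] at hmid
      exact hmid
    -- Segment 4 : from t3 to y
    have seg4 : pitman (pathEnc N Q E) y - pitman (pathEnc N Q E) t3 = y - t3 := by
      rcases eq_or_lt_of_le ht3y with heq | hlt
      · rw [heq]; ring
      · have hct3 : cPt N Q E m ≤ t3 := by
          rcases min_cases y (cPt N Q E m) with ⟨h1, _⟩ | ⟨h1, _⟩
          · exfalso
            have : y ≤ t3 := by rw [ht3def, h1]; exact le_max_right _ _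
            exact absurd (lt_of_lt_of_le hlt this) (lt_irrefl t3)
          · rw [ht3def, h1]; exact le_max_right _ _
        exact pitman_up_after hN hQ hE hm1 hmN hct3 ht3y hbd
    rw [seg3] at seg2
    linarith

theorem pitman_piecewise_linear' :
    (∀ n, 1 ≤ n → n ≤ N →
      ∀ x ∈ Set.Icc (bPt Q E n) (cPt N Q E n), ∀ y ∈ Set.Icc (bPt Q E n) (cPt N Q E n),
        pitman (pathEnc N Q E) x - pitman (pathEnc N Q E) y = y - x) ∧
    (∀ x y : ℝ, x ≤ y →
      (Set.Ioo x y ∩ ⋃ n ∈ Finset.Icc 1 N, Set.Ioo (bPt Q E n) (cPt N Q E n)) = ∅ →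
      pitman (pathEnc N Q E) y - pitman (pathEnc N Q E) x = y - x) := by
  constructor
  · intro n hn1 hnN x ⟨hx1, hx2⟩ y ⟨hy1, hy2⟩
    have h1 := pitman_down hN hQ hE hn1 hnN hx1 hx2
    have h2 := pitman_down hN hQ hE hn1 hnN hy1 hy2
    linarith
  · intro x y hxy hdisj
    apply claim_aux hN hQ hE N (le_refl N) x y hxy (fun h => absurd h (lt_irrefl N))
    intro m hm1 hmN
    apply Set.eq_empty_of_subset_empty
    rw [← hdisj]
    apply Set.inter_subset_inter_right
    intro t ht
    simp only [Set.mem_iUnion, Finset.mem_Icc]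
    exact ⟨m, ⟨hm1, hmN⟩, ht⟩

end Main


theorem pitman_piecewise_linear (N : ℕ) (hN : 1 ≤ N) (Q E : ℕ → ℝ)
    (hQ : ∀ n, 1 ≤ n → n ≤ N → 0 < Q n)
    (hE : ∀ n, 1 ≤ n → n ≤ N - 1 → 0 < E n) :
    (∀ n, 1 ≤ n → n ≤ N →
      ∀ x ∈ Set.Icc (bPt Q E n) (cPt N Q E n), ∀ y ∈ Set.Icc (bPt Q E n) (cPt N Q E n),
        pitman (pathEnc N Q E) x - pitman (pathEnc N Q E) y = y - x) ∧
    (∀ x y : ℝ, x ≤ y →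
      (Set.Ioo x y ∩ ⋃ n ∈ Finset.Icc 1 N, Set.Ioo (bPt Q E n) (cPt N Q E n)) = ∅ →
      pitman (pathEnc N Q E) y - pitman (pathEnc N Q E) x = y - x) :=
  pitman_piecewise_linear' hN hQ hE
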